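/- Under the monotone bandit assumption, if arm Q's reward sequence ρ_Q converges to the optimal value v* and arm Φ's sequence ρ_Φ converges to a strictly smaller value v < v*, then there exists N such that for all T with n_Q ≥ N pulls of Q, the constant-Q policy over the remaining rounds has strictly higher expected value than any policy that pulls Φ at least once in the remaining rounds, for all sufficiently many remaining rounds. -/

import Mathlib

open Finset Filter

/-- Policy invariance of RPIES in the limit: if the nondecreasing reward sequence of the
Q arm converges to the optimal value `v*` while that of the Φ arm converges to `v < v*`,
then there is `N` such that whenever the Q arm has already been pulled `n_Q ≥ N` times
(and the Φ arm `n_Φ` times), for all sufficiently many remaining rounds `h`, pulling only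
Q for the `h` remaining rounds has strictly higher expected value than any policy pulling
Φ at least once, i.e. any split of the `h` rounds into `k` Q-pulls and `h - k` Φ-pulls
with `k < h`. -/
theorem stmt13 (ρQ ρΦ : ℕ → ℝ) (hQmono : Monotone ρQ) (hΦmono : Monotone ρΦ)
    (vstar v : ℝ) (hv : v < vstar)
    (hQlim : Tendsto ρQ atTop (nhds vstar)) (hΦlim : Tendsto ρΦ atTop (nhds v)) :
    ∃ N : ℕ, ∀ nQ : ℕ, N ≤ nQ → ∀ nΦ : ℕ, ∃ H : ℕ, ∀ h : ℕ, H ≤ h → ∀ k : ℕ, k < h →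
      (∑ i ∈ Finset.range k, ρQ (nQ + i + 1)) +
        (∑ i ∈ Finset.range (h - k), ρΦ (nΦ + i + 1)) <
      ∑ i ∈ Finset.range h, ρQ (nQ + i + 1) := by
  have hΦle : ∀ n, ρΦ n ≤ v := fun n => hΦmono.ge_of_tendsto hΦlim n
  obtain ⟨N, hN⟩ := (hQlim.eventually (eventually_gt_nhds hv)).exists_forall_of_atTop
  refine ⟨N, fun nQ hnQ nΦ => ⟨0, fun h _ k hk => ?_⟩⟩
  have hkh : k ≤ h := hk.le
  have hsplit : ∑ i ∈ Finset.range h, ρQ (nQ + i + 1)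
      = (∑ i ∈ Finset.range k, ρQ (nQ + i + 1))
        + ∑ i ∈ Finset.range (h - k), ρQ (nQ + (k + i) + 1) := by
    rw [← Finset.sum_range_add (fun i => ρQ (nQ + i + 1)) k (h - k),
      Nat.add_sub_cancel' hkh]
  rw [hsplit]
  refine (add_lt_add_iff_left _).mpr ?_
  refine Finset.sum_lt_sum_of_nonempty (by simp only [Finset.nonempty_range_iff]; omega) fun i _ => ?_
  calc ρΦ (nΦ + i + 1) ≤ v := hΦle _
    _ < ρQ N := hN N le_rfl
    _ ≤ ρQ (nQ + (k + i) + 1) := hQmono (by omega)
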